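/- For any $z_h$ in the mean-zero subspace $Z_h = \{v_h \in V_h : \langle v_h, 1 \rangle = 0\}$ of the periodic DG space and any $\theta \ne \tfrac12$, one has $\|z_h\|^2 = -\langle D_{h,\theta} z_h, \Pi_{1-\theta} \zeta_z \rangle$, where $\zeta_z(x) = \int_{x_{1/2}}^{x} z_h(s)\,ds$ and $\Pi_{1-\theta}$ is the Gauss–Radau-type projection satisfying $D_{h,1-\theta}\Pi_{1-\theta} w = \Pi_0 \partial_x w$ for periodic absolutely continuous $w$. -/

import Mathlib

open Polynomial

/-- The `L²` inner product of two piecewise polynomials (given cellwise) on the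
periodic mesh `x_0 < x_1 < ⋯ < x_{N+1}`, with cell `j = [x_j, x_{j+1}]`. -/
noncomputable def ip (N : ℕ) (xs : ℕ → ℝ) (w v : Fin (N+1) → Polynomial ℝ) : ℝ :=
  ∑ j : Fin (N+1), ∫ x in (xs j.val)..(xs (j.val + 1)), (w j).eval x * (v j).eval x

/-- Membership in the DG space `V_h` of piecewise polynomials of degree `≤ k`. -/
def memVh (k N : ℕ) (v : Fin (N+1) → Polynomial ℝ) : Prop :=
  ∀ j, (v j).natDegree ≤ k

/-- Left trace `v⁻` at the node `x_{j+1}` (right endpoint of cell `j`). -/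
noncomputable def leftT (N : ℕ) (xs : ℕ → ℝ) (v : Fin (N+1) → Polynomial ℝ)
    (j : Fin (N+1)) : ℝ :=
  (v j).eval (xs (j.val + 1))

/-- Right trace `v⁺` at the node `x_{j+1}` (left endpoint of the next cell,
with periodic wrap-around identifying `x_{N+1}` with `x_0`). -/
noncomputable def rightT (N : ℕ) (xs : ℕ → ℝ) (v : Fin (N+1) → Polynomial ℝ)
    (j : Fin (N+1)) : ℝ :=
  (v (j + 1)).eval (xs ((j + 1 : Fin (N+1)).val))

/-- Jump `[v] = v⁺ - v⁻` at the node following cell `j`. -/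
noncomputable def jump (N : ℕ) (xs : ℕ → ℝ) (v : Fin (N+1) → Polynomial ℝ)
    (j : Fin (N+1)) : ℝ :=
  rightT N xs v j - leftT N xs v j

/-- The `θ`-weighted numerical flux `ŵ = θ w⁻ + (1-θ) w⁺`. -/
noncomputable def flux (N : ℕ) (xs : ℕ → ℝ) (θ : ℝ) (w : Fin (N+1) → Polynomial ℝ)
    (j : Fin (N+1)) : ℝ :=
  θ * leftT N xs w j + (1 - θ) * rightT N xs w j

/-- `DGform k N xs θ w Dw` states that `Dw = D_{h,θ} w`, i.e. `Dw` satisfies the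
variational form `⟨D_{h,θ} w, v⟩ = -⟨w, ∂ₓ v⟩ - ∑_j ŵ_{j+1/2} [v]_{j+1/2}` for all
test functions `v` in the DG space. -/
def DGform (k N : ℕ) (xs : ℕ → ℝ) (θ : ℝ) (w Dw : Fin (N+1) → Polynomial ℝ) : Prop :=
  ∀ v, memVh k N v →
    ip N xs Dw v =
      -(∑ j : Fin (N+1), ∫ x in (xs j.val)..(xs (j.val + 1)),
          (w j).eval x * ((v j).derivative.eval x))
      - ∑ j : Fin (N+1), flux N xs θ w j * jump N xs v j

/-- Key identity for the invertibility of `D_{h,θ}` on the mean-zero subspace: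
for `z_h ∈ Z_h` and `θ ≠ 1/2`, `‖z_h‖² = -⟨D_{h,θ} z_h, Π_{1-θ} ζ_z⟩`.
Here `p` plays the role of `Π_{1-θ} ζ_z` where `ζ_z(x) = ∫_{x_{1/2}}^x z_h`, so that
the defining property `D_{h,1-θ} Π_{1-θ} ζ_z = Π₀ ∂ₓ ζ_z = Π₀ z_h = z_h` of the
Gauss–Radau-type projection reads `DGform k N xs (1-θ) p z`. -/
theorem dg_inverse_identity (k N : ℕ) (xs : ℕ → ℝ) (hxs : StrictMono xs)
    (θ : ℝ) (hθ : θ ≠ 1/2)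
    (z Dz p : Fin (N+1) → Polynomial ℝ)
    (hz : memVh k N z) (hDz : memVh k N Dz) (hp : memVh k N p)
    (hmean : ip N xs z (fun _ => 1) = 0)
    (hDzdef : DGform k N xs θ z Dz)
    (hpdef : DGform k N xs (1 - θ) p z) :
    ip N xs z z = - ip N xs Dz p := by
  have h1 := hpdef z hz
  have h2 := hDzdef p hp
  have ftc : ∀ (q : Polynomial ℝ) (a b : ℝ),
      (∫ x in a..b, q.derivative.eval x) = q.eval b - q.eval a := fun q a b =>
    intervalIntegral.integral_eq_sub_of_hasDerivAt (fun x _ => q.hasDerivAt x)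
      ((q.derivative.continuous).intervalIntegrable _ _)
  set G : Fin (N+1) → ℝ := fun j => (p j * z j).eval (xs j.val) with hG
  set L : Fin (N+1) → ℝ := fun j => (p j * z j).eval (xs (j.val + 1)) with hL
  have cell : ∀ j : Fin (N+1),
      (∫ x in (xs j.val)..(xs (j.val + 1)), (p j).eval x * ((z j).derivative.eval x))
      + (∫ x in (xs j.val)..(xs (j.val + 1)), (z j).eval x * ((p j).derivative.eval x))
      = L j - G j := by
    intro j
    rw [← intervalIntegral.integral_add (f := fun x => (p j).eval x * (z j).derivative.eval x)
        (g := fun x => (z j).eval x * (p j).derivative.eval x)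
        (((p j).continuous.mul ((z j).derivative.continuous)).intervalIntegrable _ _)
        (((z j).continuous.mul ((p j).derivative.continuous)).intervalIntegrable _ _)]
    rw [hL, hG, ← ftc (p j * z j)]
    apply intervalIntegral.integral_congr
    intro x _
    simp [Polynomial.derivative_mul]
    ring
  have node : ∀ j : Fin (N+1),
      flux N xs (1-θ) p j * jump N xs z j + flux N xs θ z j * jump N xs p j
      = G (j + 1) - L j := by
    intro j
    simp only [flux, jump, leftT, rightT, hG, hL, Polynomial.eval_mul]
    ring
  have shift : ∑ j : Fin (N+1), G (j + 1) = ∑ j : Fin (N+1), G j :=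
    Fintype.sum_equiv (Equiv.addRight (1 : Fin (N+1))) _ _ (fun j => rfl)
  have key : (∑ j : Fin (N+1), ∫ x in (xs j.val)..(xs (j.val + 1)),
        (p j).eval x * ((z j).derivative.eval x))
      + (∑ j : Fin (N+1), ∫ x in (xs j.val)..(xs (j.val + 1)),
        (z j).eval x * ((p j).derivative.eval x))
      + ((∑ j : Fin (N+1), flux N xs (1-θ) p j * jump N xs z j)
        + ∑ j : Fin (N+1), flux N xs θ z j * jump N xs p j) = 0 := by
    rw [← Finset.sum_add_distrib, ← Finset.sum_add_distrib, ← Finset.sum_add_distrib]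
    have : ∀ j ∈ Finset.univ, ((∫ x in (xs j.val)..(xs (j.val + 1)),
        (p j).eval x * ((z j).derivative.eval x))
      + (∫ x in (xs j.val)..(xs (j.val + 1)),
        (z j).eval x * ((p j).derivative.eval x)))
      + (flux N xs (1-θ) p j * jump N xs z j + flux N xs θ z j * jump N xs p j)
      = G (j + 1) - G j := by
      intro j _
      rw [cell j, node j]; ring
    rw [Finset.sum_congr rfl this, Finset.sum_sub_distrib, shift, sub_self]
  rw [h1, h2]
  linarith [key]
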